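/- For every integer k ≥ 0 and every ρ ∈ (0,1] there exists a constant C > 0 depending only on k and ρ such that: for every bounded convex set T ⊂ ℝ³ of diameter h_T > 0, every point x₀ ∈ ℝ³ and radius r ≥ ρ h_T such that the open ball B(x₀, r) is contained in T, and every polynomial Q : ℝ³ → ℝ of total degree at most k, one has sup_{x ∈ T} |Q(x)| ≤ C · sup_{x ∈ B(x₀, r)} |Q(x)|. -/

import Mathlib

open MvPolynomial

noncomputable section

lemma aux_eval_aeval (t : ℝ) (f : Fin 3 → Polynomial ℝ) (P : MvPolynomial (Fin 3) ℝ) :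
    Polynomial.eval t (MvPolynomial.aeval f P)
      = MvPolynomial.eval (fun i => Polynomial.eval t (f i)) P := by
  induction P using MvPolynomial.induction_on with
  | C a => simp
  | add p q hp hq => simp [hp, hq]
  | mul_X p i hp => simp [hp]

lemma aux_eval_aeval' (y : Fin 3 → ℝ) (f : Fin 3 → MvPolynomial (Fin 3) ℝ)
    (P : MvPolynomial (Fin 3) ℝ) :
    eval y (aeval f P) = eval (fun i => eval y (f i)) P := by
  induction P using MvPolynomial.induction_on with
  | C a => simp
  | add p q hp hq => rw [map_add, map_add, map_add, hp, hq]
  | mul_X p i hp => rw [map_mul, aeval_X, map_mul, hp, map_mul, eval_X]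

lemma aux_td (f : Fin 3 → MvPolynomial (Fin 3) ℝ) (hf : ∀ i, (f i).totalDegree ≤ 1)
    (P : MvPolynomial (Fin 3) ℝ) : (aeval f P).totalDegree ≤ P.totalDegree := by
  conv_lhs => rw [P.as_sum]
  rw [map_sum]
  refine (totalDegree_finset_sum _ _).trans (Finset.sup_le fun s hs => ?_)
  rw [aeval_monomial]
  refine (totalDegree_mul _ _).trans ?_
  have h1 : (algebraMap ℝ (MvPolynomial (Fin 3) ℝ) (coeff s P)).totalDegree = 0 := by
    simp [algebraMap_eq]
  rw [h1, zero_add]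
  refine (totalDegree_finset_prod _ _).trans ?_
  calc ∑ i ∈ s.support, ((f i) ^ (s i)).totalDegree
      ≤ ∑ i ∈ s.support, (s i) * (f i).totalDegree :=
        Finset.sum_le_sum fun i _ => totalDegree_pow _ _
    _ ≤ ∑ i ∈ s.support, (s i) * 1 :=
        Finset.sum_le_sum fun i _ => Nat.mul_le_mul_left _ (hf i)
    _ = s.sum fun _ e => e := by simp [Finsupp.sum]
    _ ≤ P.totalDegree := le_totalDegree hs

lemma aux_zero (P : MvPolynomial (Fin 3) ℝ) (r : ℝ) (hr : 0 < r)
    (h : ∀ y : EuclideanSpace ℝ (Fin 3), ‖y‖ < r → eval (fun i => y i) P = 0) :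
    P = 0 := by
  have key : ∀ z : Fin 3 → ℝ, eval z P = 0 := by
    intro z
    set z' : EuclideanSpace ℝ (Fin 3) := (EuclideanSpace.equiv (Fin 3) ℝ).symm z with hz'
    set q : Polynomial ℝ := aeval (fun i => Polynomial.C (z i) * Polynomial.X) P with hqdef
    have hev : ∀ t : ℝ, Polynomial.eval t q = eval (fun i => z i * t) P := by
      intro t
      rw [hqdef, aux_eval_aeval]
      simp
    have hε : 0 < r / (‖z'‖ + 1) := by positivity
    have hroot : Set.Ioo (-(r / (‖z'‖ + 1))) (r / (‖z'‖ + 1)) ⊆ {t | Polynomial.IsRoot q t} := by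
      intro t ht
      have habs : |t| < r / (‖z'‖ + 1) := abs_lt.2 ⟨ht.1, ht.2⟩
      have hy : ‖t • z'‖ < r := by
        rw [norm_smul, Real.norm_eq_abs]
        calc |t| * ‖z'‖ ≤ |t| * (‖z'‖ + 1) := by
              exact mul_le_mul_of_nonneg_left (by linarith) (abs_nonneg t)
          _ < (r / (‖z'‖ + 1)) * (‖z'‖ + 1) := by
              apply mul_lt_mul_of_pos_right habs
              positivity
          _ = r := by field_simp
      have := h (t • z') hy
      have hcoord : (fun i => (t • z') i) = fun i => z i * t := by
        funext i
        simp [hz', mul_comm]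
      rw [hcoord] at this
      show Polynomial.eval t q = 0
      rw [hev t]
      exact this
    have hq0 : q = 0 :=
      Polynomial.eq_zero_of_infinite_isRoot q ((Set.Ioo_infinite (by linarith)).mono hroot)
    have := hev 1
    rw [hq0] at this
    simpa using this.symm
  have : P = (0 : MvPolynomial (Fin 3) ℝ) := MvPolynomial.funext (by simpa using key)
  exact this


abbrev E3 := EuclideanSpace ℝ (Fin 3)

noncomputable def evalMap (k : ℕ) (s : Set E3) :
    MvPolynomial.restrictTotalDegree (Fin 3) ℝ k →ₗ[ℝ] C(s, ℝ) where
  toFun P := ⟨fun y => eval (fun i => (y : E3) i) (P : MvPolynomial (Fin 3) ℝ), by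
    apply (MvPolynomial.continuous_eval _).comp
    exact continuous_pi fun i => ((EuclideanSpace.proj (𝕜 := ℝ) i).continuous).comp
      continuous_subtype_val⟩
  map_add' P Q := by ext y; simp
  map_smul' c P := by ext y; simp [MvPolynomial.smul_eval]

lemma evalMap_apply (k : ℕ) (s : Set E3) (P : MvPolynomial.restrictTotalDegree (Fin 3) ℝ k)
    (y : s) : evalMap k s P y = eval (fun i => (y : E3) i) (P : MvPolynomial (Fin 3) ℝ) := rfl

set_option synthInstance.maxHeartbeats 1000000 in
set_option maxHeartbeats 2000000 in
lemma aux_key (k : ℕ) (R : ℝ) (hR : 1 ≤ R) :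
    ∃ C > (0 : ℝ), ∀ P : MvPolynomial (Fin 3) ℝ, P.totalDegree ≤ k →
      ∀ y : E3, ‖y‖ ≤ R →
        |eval (fun i => y i) P| ≤
          C * sSup ((fun z : E3 => |eval (fun i => z i) P|) '' Metric.ball 0 1) := by
  classical
  set V := MvPolynomial.restrictTotalDegree (Fin 3) ℝ k with hV
  haveI : FiniteDimensional ℝ V := inferInstance
  haveI : CompactSpace (Metric.closedBall (0 : E3) R) :=
    isCompact_iff_compactSpace.mp (isCompact_closedBall _ _)
  haveI : CompactSpace (Metric.closedBall (0 : E3) 1) :=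
    isCompact_iff_compactSpace.mp (isCompact_closedBall _ _)
  set n := Module.finrank ℝ V with hn
  have hnpos : 0 < n := by
    rw [hn]
    apply Module.finrank_pos_iff.mpr
    refine ⟨⟨⟨1, ?_⟩, 0, ?_⟩⟩
    · rw [MvPolynomial.mem_restrictTotalDegree]; simp
    · intro hcontra
      have : (1 : MvPolynomial (Fin 3) ℝ) = 0 := congrArg Subtype.val hcontra
      exact one_ne_zero this
  haveI : Nonempty (Fin n) := Fin.pos_iff_nonempty.mp hnpos
  set b := Module.finBasis ℝ V with hb
  set e : V ≃ₗ[ℝ] (Fin n → ℝ) := b.equivFun with he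
  set Lb : (Fin n → ℝ) →L[ℝ] C(Metric.closedBall (0 : E3) R, ℝ) :=
    LinearMap.toContinuousLinearMap
      ((evalMap k (Metric.closedBall (0 : E3) R)) ∘ₗ (e.symm : (Fin n → ℝ) →ₗ[ℝ] V)) with hLb
  set Ls : (Fin n → ℝ) →L[ℝ] C(Metric.closedBall (0 : E3) 1, ℝ) :=
    LinearMap.toContinuousLinearMap
      ((evalMap k (Metric.closedBall (0 : E3) 1)) ∘ₗ (e.symm : (Fin n → ℝ) →ₗ[ℝ] V)) with hLs
  set M := ‖Lb‖ with hM
  -- minimum of ‖Ls c‖ on the unit sphere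
  have hconts : Continuous fun c : Fin n → ℝ => ‖Ls c‖ := (Ls.continuous).norm
  obtain ⟨c₀, hc₀mem, hc₀min⟩ :=
    (isCompact_sphere (0 : Fin n → ℝ) 1).exists_isMinOn
      (NormedSpace.sphere_nonempty.mpr zero_le_one) hconts.continuousOn
  set m := ‖Ls c₀‖ with hm
  have hc₀norm : ‖c₀‖ = 1 := by simpa using hc₀mem
  have hmpos : 0 < m := by
    rcases lt_or_eq_of_le (norm_nonneg (Ls c₀)) with h | h
    · exact h
    · exfalso
      have hz : Ls c₀ = 0 := by
        rw [← norm_eq_zero]; exact h.symm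
      have hev0 : ∀ y : E3, ‖y‖ < 1 → eval (fun i => y i) ((e.symm c₀ : V) : MvPolynomial (Fin 3) ℝ) = 0 := by
        intro y hy
        have hymem : y ∈ Metric.closedBall (0 : E3) 1 := by
          simp [Metric.mem_closedBall, dist_eq_norm, le_of_lt hy]
        have := congrArg (fun g : C(Metric.closedBall (0 : E3) 1, ℝ) => g ⟨y, hymem⟩) hz
        simpa [hLs, evalMap_apply] using this
      have hP0 : ((e.symm c₀ : V) : MvPolynomial (Fin 3) ℝ) = 0 := aux_zero _ 1 one_pos hev0
      have : (e.symm c₀ : V) = 0 := Subtype.ext hP0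
      have hc0 : c₀ = 0 := by
        have := congrArg e this
        simpa using this
      rw [hc0] at hc₀norm
      simp at hc₀norm
  -- lower bound: m * ‖c‖ ≤ ‖Ls c‖
  have hlower : ∀ c : Fin n → ℝ, m * ‖c‖ ≤ ‖Ls c‖ := by
    intro c
    rcases eq_or_ne c 0 with rfl | hc
    · simp
    · have hcn : 0 < ‖c‖ := norm_pos_iff.mpr hc
      have hunit : ‖c‖⁻¹ • c ∈ Metric.sphere (0 : Fin n → ℝ) 1 := by
        simp [norm_smul, abs_of_pos (inv_pos.mpr hcn), inv_mul_cancel₀ hcn.ne']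
      have h1 := hc₀min hunit
      have hsc : ‖Ls (‖c‖⁻¹ • c)‖ = ‖c‖⁻¹ * ‖Ls c‖ := by
        rw [map_smul]
        rw [norm_smul (‖c‖⁻¹) (Ls c), Real.norm_eq_abs, abs_of_pos (inv_pos.mpr hcn)]
      have h2 : m ≤ ‖Ls (‖c‖⁻¹ • c)‖ := h1
      rw [hsc] at h2
      have h3 := mul_le_mul_of_nonneg_left h2 hcn.le
      calc m * ‖c‖ = ‖c‖ * m := mul_comm _ _
        _ ≤ ‖c‖ * (‖c‖⁻¹ * ‖Ls c‖) := h3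
        _ = ‖Ls c‖ := by field_simp
  refine ⟨(M + 1) / m, by positivity, ?_⟩
  intro P hP y hy
  set Pv : V := ⟨P, (MvPolynomial.mem_restrictTotalDegree _ _ _).mpr hP⟩ with hPv
  set c : Fin n → ℝ := e Pv with hc
  have hesymm : (e.symm c : V) = Pv := by simp [hc]
  set S := (fun z : E3 => |eval (fun i => z i) P|) '' Metric.ball 0 1 with hS
  have hSne : S.Nonempty := ⟨_, ⟨(0 : E3), by simp [Metric.mem_ball], rfl⟩⟩
  have hSbdd : BddAbove S := by
    refine ⟨‖Ls c‖, ?_⟩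
    rintro v ⟨z, hz, rfl⟩
    have hzmem : z ∈ Metric.closedBall (0 : E3) 1 := Metric.ball_subset_closedBall hz
    have : |eval (fun i => z i) P| = ‖(Ls c) ⟨z, hzmem⟩‖ := by
      simp [hLs, hesymm, evalMap_apply, hPv, Real.norm_eq_abs]
    have hle : |eval (fun i => z i) P| ≤ ‖Ls c‖ := by
      rw [this]; exact (Ls c).norm_coe_le_norm _
    exact hle
  have hSpos : 0 ≤ sSup S := by
    have h0 : (0:ℝ) ≤ |eval (fun i => (0:E3) i) P| := abs_nonneg _
    exact h0.trans (le_csSup hSbdd ⟨(0:E3), by simp [Metric.mem_ball], rfl⟩)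
  have hymem : y ∈ Metric.closedBall (0 : E3) R := by
    simp [Metric.mem_closedBall, dist_eq_norm, hy]
  have h1 : |eval (fun i => y i) P| ≤ ‖Lb c‖ := by
    have heq : |eval (fun i => y i) P| = ‖(Lb c) ⟨y, hymem⟩‖ := by
      simp [hLb, hesymm, evalMap_apply, hPv, Real.norm_eq_abs]
    rw [heq]; exact (Lb c).norm_coe_le_norm _
  have h2 : ‖Lb c‖ ≤ M * ‖c‖ := Lb.le_opNorm c
  have h3 := hlower c
  have h4 : ‖Ls c‖ ≤ sSup S := by
    refine (ContinuousMap.norm_le _ hSpos).mpr ?_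
    intro z
    have hclos : Metric.closedBall (0 : E3) 1 ⊆
        {w : E3 | |eval (fun i => w i) P| ≤ sSup S} := by
      rw [← closure_ball (0 : E3) one_ne_zero]
      apply closure_minimal
      · intro w hw
        exact le_csSup hSbdd ⟨w, hw, rfl⟩
      · exact isClosed_le ((continuous_abs).comp ((MvPolynomial.continuous_eval P).comp
          (continuous_pi fun i => (EuclideanSpace.proj (𝕜 := ℝ) i).continuous))) continuous_const
    have hz := hclos z.2
    have heq : ‖(Ls c) z‖ = |eval (fun i => (z : E3) i) P| := by
      simp [hLs, hesymm, evalMap_apply, hPv, Real.norm_eq_abs]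
    rw [heq]
    exact hz
  have hMnn : 0 ≤ M := hM ▸ norm_nonneg Lb
  have hLsc : 0 ≤ ‖Ls c‖ := norm_nonneg _
  calc |eval (fun i => y i) P| ≤ M * ‖c‖ := h1.trans h2
    _ ≤ (M + 1) / m * sSup S := by
        rw [div_eq_mul_inv]
        have hcle : ‖c‖ ≤ m⁻¹ * sSup S := by
          have : m * ‖c‖ ≤ sSup S := h3.trans h4
          rw [← le_div_iff₀' hmpos] at this
          rw [div_eq_mul_inv, mul_comm] at this
          exact this
        have hnc : 0 ≤ ‖c‖ := norm_nonneg _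
        have hminv : 0 ≤ m⁻¹ := (inv_pos.mpr hmpos).le
        nlinarith [mul_le_mul_of_nonneg_left hcle hMnn]

/-- On a bounded convex set `T ⊂ ℝ³` of positive diameter containing a ball
`B(x₀, r)` with `r ≥ ρ · diam T`, the sup of `|Q|` over `T` is controlled by the sup of
`|Q|` over the ball, uniformly over such configurations, for polynomials `Q` of total
degree at most `k`. -/
theorem sup_poly_le_sup_ball (k : ℕ) (ρ : ℝ) (hρ : ρ ∈ Set.Ioc (0 : ℝ) 1) :
    ∃ C > (0 : ℝ), ∀ T : Set (EuclideanSpace ℝ (Fin 3)),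
      Convex ℝ T → Bornology.IsBounded T → 0 < Metric.diam T →
      ∀ (x₀ : EuclideanSpace ℝ (Fin 3)) (r : ℝ), ρ * Metric.diam T ≤ r →
        Metric.ball x₀ r ⊆ T →
        ∀ Q : MvPolynomial (Fin 3) ℝ, Q.totalDegree ≤ k →
          ∀ x ∈ T, |eval (fun i => x i) Q| ≤
            C * sSup ((fun y : EuclideanSpace ℝ (Fin 3) =>
              |eval (fun i => y i) Q|) '' Metric.ball x₀ r) := by
  obtain ⟨hρ0, hρ1⟩ := hρ
  obtain ⟨C, hC, hkey⟩ := aux_key k (1/ρ + 1) (by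
    have : 0 < 1/ρ := by positivity
    linarith)
  refine ⟨C, hC, ?_⟩
  intro T _hconv hbdd hdiam x₀ r hr hball Q hQ x hx
  have hrpos : 0 < r := lt_of_lt_of_le (by positivity) hr
  set Qs : MvPolynomial (Fin 3) ℝ :=
    aeval (fun i => MvPolynomial.C (x₀ i) + MvPolynomial.C r * MvPolynomial.X i) Q with hQsdef
  have hQs_td : Qs.totalDegree ≤ k := by
    refine (aux_td _ (fun i => ?_) Q).trans hQ
    refine (MvPolynomial.totalDegree_add _ _).trans ?_
    have h1 : (MvPolynomial.C (x₀ i) : MvPolynomial (Fin 3) ℝ).totalDegree = 0 :=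
      MvPolynomial.totalDegree_C _
    have h2 : (MvPolynomial.C r * MvPolynomial.X i : MvPolynomial (Fin 3) ℝ).totalDegree ≤ 1 := by
      refine (MvPolynomial.totalDegree_mul _ _).trans ?_
      simp [MvPolynomial.totalDegree_C, MvPolynomial.totalDegree_X]
    simp [h1, h2]
  have heval : ∀ y : E3, eval (fun i => y i) Qs = eval (fun i => x₀ i + r * y i) Q := by
    intro y
    rw [hQsdef, aux_eval_aeval']
    simp
  have himg : ((fun y : E3 => |eval (fun i => y i) Qs|) '' Metric.ball 0 1)
      = ((fun y : E3 => |eval (fun i => y i) Q|) '' Metric.ball x₀ r) := by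
    ext v
    constructor
    · rintro ⟨y, hy, rfl⟩
      rw [mem_ball_zero_iff] at hy
      refine ⟨x₀ + r • y, ?_, ?_⟩
      · rw [Metric.mem_ball, dist_eq_norm]
        have : x₀ + r • y - x₀ = r • y := by abel
        rw [this, norm_smul, Real.norm_eq_abs, abs_of_pos hrpos]
        calc r * ‖y‖ < r * 1 := by exact mul_lt_mul_of_pos_left hy hrpos
          _ = r := mul_one r
      · show |eval (fun i => (x₀ + r • y) i) Q| = |eval (fun i => y i) Qs|
        have hco : (fun i => (x₀ + r • y) i) = fun i => x₀ i + r * y i := by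
          funext i
          simp [PiLp.add_apply, PiLp.smul_apply, smul_eq_mul]
        rw [heval y, hco]
    · rintro ⟨z, hz, rfl⟩
      rw [Metric.mem_ball, dist_eq_norm] at hz
      refine ⟨r⁻¹ • (z - x₀), ?_, ?_⟩
      · rw [mem_ball_zero_iff, norm_smul, Real.norm_eq_abs, abs_of_pos (inv_pos.mpr hrpos)]
        rw [inv_mul_lt_iff₀ hrpos, mul_one]
        exact hz
      · show |eval (fun i => (r⁻¹ • (z - x₀) : E3) i) Qs| = |eval (fun i => z i) Q|
        have hco : (fun i => x₀ i + r * ((r⁻¹ • (z - x₀) : E3) i)) = fun i => z i := by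
          funext i
          simp only [PiLp.smul_apply, PiLp.sub_apply, smul_eq_mul]
          field_simp
          ring
        rw [heval, hco]
  set yx : E3 := r⁻¹ • (x - x₀) with hyx
  have hx₀T : x₀ ∈ T := hball (by simp [Metric.mem_ball, hrpos])
  have hdx : dist x x₀ ≤ Metric.diam T := Metric.dist_le_diam_of_mem hbdd hx hx₀T
  have hdiamle : Metric.diam T ≤ r / ρ := by
    rw [le_div_iff₀ hρ0]
    calc Metric.diam T * ρ = ρ * Metric.diam T := mul_comm _ _
      _ ≤ r := hr
  have hyxnorm : ‖yx‖ ≤ 1/ρ + 1 := by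
    rw [hyx, norm_smul, Real.norm_eq_abs, abs_of_pos (inv_pos.mpr hrpos)]
    have h1 : ‖x - x₀‖ = dist x x₀ := (dist_eq_norm _ _).symm
    have h2 : dist x x₀ ≤ r / ρ := hdx.trans hdiamle
    have h3 : r⁻¹ * ‖x - x₀‖ ≤ r⁻¹ * (r / ρ) := by
      rw [h1]
      exact mul_le_mul_of_nonneg_left h2 (inv_pos.mpr hrpos).le
    have h4 : r⁻¹ * (r / ρ) = 1/ρ := by field_simp
    have h5 : 0 < 1/ρ := by positivity
    linarith
  have hmain := hkey Qs hQs_td yx hyxnorm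
  have hlhs : eval (fun i => yx i) Qs = eval (fun i => x i) Q := by
    rw [heval]
    have hco : (fun i => x₀ i + r * yx i) = fun i => x i := by
      funext i
      rw [hyx]
      simp only [PiLp.smul_apply, PiLp.sub_apply, smul_eq_mul]
      field_simp
      ring
    rw [hco]
  rw [hlhs, himg] at hmain
  exact hmain
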